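/- Let n ≥ 1, let R be a commutative ring, and let Γ be a weighted matrix digraph on vertices {0,1,…,n} given by a finite arc type E with source map s, target map t and weight map w as above. Fix a vertex j ∈ {1,…,n}. Let Γ_j be the digraph obtained from Γ by deleting all arcs e with t(e) = j and s(e) ≠ 0 (keeping all in-arcs to j whose source is the root), and let Γ̄_j be the digraph obtained from Γ by deleting all arcs e with t(e) = j and s(e) = 0. Then the sum of arborescence weights of Γ equals the sum of arborescence weights of Γ_j plus the sum of arborescence weights of Γ̄_j. -/

import Mathlib

attribute [local instance] Classical.propDecidable

/-- A directed cycle within the arc set `S`: a nonempty list of arcs `e₁,…,e_r` of `S` with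
`t eₖ = s eₖ₊₁` for `k < r` and `t e_r = s e₁`. -/
def HasCycleIn {V E : Type*} (s t : E → V) (S : Finset E) : Prop :=
  ∃ (l : List E) (hl : l ≠ []), (∀ e ∈ l, e ∈ S) ∧
    List.Chain' (fun e f => t e = s f) l ∧ t (l.getLast hl) = s (l.head hl)

/-- An arborescence of the matrix digraph on vertices `{0,…,n}`: a set `S` of `n` arcs such
that every vertex `i ∈ {1,…,n}` is the target of exactly one arc of `S` and `S` contains no
directed cycle. -/
def IsArbor {E : Type*} (n : ℕ) (s t : E → Fin (n + 1)) (S : Finset E) : Prop :=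
  S.card = n ∧ (∀ i : Fin (n + 1), i ≠ 0 → ∃! e, e ∈ S ∧ t e = i) ∧ ¬ HasCycleIn s t S

/-- Fix a vertex `j ∈ {1,…,n}`. Let `Γⱼ` be obtained from `Γ` by deleting
all in-arcs to `j` whose source is not the root, and `Γ̄ⱼ` by deleting all in-arcs to `j` whose
source is the root. Then the sum of arborescence weights of `Γ` equals the sum for `Γⱼ` plus
the sum for `Γ̄ⱼ`. -/
lemma hasCycle_map_iff {V E : Type*} (s t : E → V) (P : E → Prop) (S : Finset {e // P e}) :
    HasCycleIn (fun e => s e.1) (fun e => t e.1) S ↔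
      HasCycleIn s t (S.map (Function.Embedding.subtype P)) := by
  constructor
  · rintro ⟨l, hl, hmem, hchain, hlast⟩
    refine ⟨l.map Subtype.val, fun h => hl (List.map_eq_nil_iff.mp h), ?_, ?_, ?_⟩
    · intro e he
      obtain ⟨a, ha, rfl⟩ := List.mem_map.1 he
      exact Finset.mem_map.2 ⟨a, hmem a ha, rfl⟩
    · exact (List.isChain_map _).2 hchain
    · rw [List.getLast_map, List.head_map]; exact hlast
  · rintro ⟨l, hl, hmem, hchain, hlast⟩
    have hP : ∀ e ∈ l, P e := by
      intro e he
      obtain ⟨a, _, rfl⟩ := Finset.mem_map.1 (hmem e he)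
      exact a.2
    refine ⟨l.attach.map (fun x => ⟨x.1, hP x.1 x.2⟩), by simpa using hl, ?_, ?_, ?_⟩
    · intro e he
      obtain ⟨a, ha, rfl⟩ := List.mem_map.1 he
      obtain ⟨b, hb, hba⟩ := Finset.mem_map.1 (hmem a.1 a.2)
      have : b = ⟨a.1, hP a.1 a.2⟩ := Subtype.ext hba
      exact this ▸ hb
    · show List.IsChain _ _; rw [List.isChain_map]
      have : List.IsChain _ l := hchain
      have hmapval : (l.attach.map (fun x : {x // x ∈ l} => x.1)) = l := by
        simp
      rw [← hmapval, List.isChain_map] at this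
      exact this
    · set l' := l.attach.map (fun x => (⟨x.1, hP x.1 x.2⟩ : {e // P e})) with hl'def
      have hl' : l' ≠ [] := by simpa [hl'def] using hl
      have heq : l'.map Subtype.val = l := by
        simp [hl'def, List.map_map, Function.comp]
      have h1 : (l'.getLast hl').1 = l.getLast hl := by
        have a1 : l.getLast? = some (l.getLast hl) := List.getLast?_eq_getLast hl
        have a2 : l.getLast? = some (l'.getLast hl').1 := by
          rw [← heq, List.getLast?_map, List.getLast?_eq_getLast hl']
          rfl
        exact (Option.some.inj (a2.symm.trans a1))
      have h2 : (l'.head hl').1 = l.head hl := by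
        have a1 : l.head? = some (l.head hl) := List.head?_eq_head hl
        have a2 : l.head? = some (l'.head hl').1 := by
          rw [← heq, List.head?_map, List.head?_eq_head hl']
          rfl
        exact (Option.some.inj (a2.symm.trans a1))
      show t (l'.getLast hl').1 = s (l'.head hl').1
      rw [h1, h2]; exact hlast

lemma isArbor_map_iff {E : Type*} (n : ℕ) (s t : E → Fin (n + 1)) (P : E → Prop)
    (S : Finset {e // P e}) :
    IsArbor n (fun e => s e.1) (fun e => t e.1) S ↔
      IsArbor n s t (S.map (Function.Embedding.subtype P)) := by
  unfold IsArbor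
  rw [Finset.card_map, ← hasCycle_map_iff]
  refine and_congr_right fun _ => and_congr_left fun _ => ?_
  constructor
  · intro h i hi
    obtain ⟨e, ⟨heS, het⟩, huniq⟩ := h i hi
    refine ⟨e.1, ⟨Finset.mem_map_of_mem _ heS, het⟩, ?_⟩
    rintro f ⟨hfS, hft⟩
    obtain ⟨a, ha, rfl⟩ := Finset.mem_map.1 hfS
    exact congrArg Subtype.val (huniq a ⟨ha, hft⟩)
  · intro h i hi
    obtain ⟨e, ⟨heS, het⟩, huniq⟩ := h i hi
    obtain ⟨a, ha, rfl⟩ := Finset.mem_map.1 heS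
    refine ⟨a, ⟨ha, het⟩, ?_⟩
    rintro b ⟨hbS, hbt⟩
    exact Subtype.ext (huniq b.1 ⟨Finset.mem_map_of_mem _ hbS, hbt⟩)

lemma sum_half {E : Type*} [Fintype E] [DecidableEq E] {R : Type*} [CommRing R]
    (n : ℕ) (s t : E → Fin (n + 1)) (w : E → R) (P : E → Prop) (Q : Finset E → Prop)
    (h1 : ∀ T : Finset E, IsArbor n s t T → Q T → ∀ e ∈ T, P e)
    (h2 : ∀ S : Finset {e // P e}, IsArbor n (fun e => s e.1) (fun e => t e.1) S →
      Q (S.map (Function.Embedding.subtype P))) :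
    (∑ T ∈ (Finset.univ.filter (IsArbor n s t)).filter Q, ∏ e ∈ T, w e)
    = ∑ S ∈ Finset.univ.filter
        (fun S : Finset {e // P e} => IsArbor n (fun e => s e.1) (fun e => t e.1) S),
        ∏ e ∈ S, w e.1 := by
  classical
  have key1 : ∀ T : Finset E, (∀ e ∈ T, P e) → (T.subtype P).map (Function.Embedding.subtype P) = T := by
    intro T hT
    rw [Finset.subtype_map, Finset.filter_true_of_mem hT]
  have key2 : ∀ S : Finset {e // P e}, (S.map (Function.Embedding.subtype P)).subtype P = S := by
    intro S
    ext a
    simp only [Finset.mem_subtype, Finset.mem_map, Function.Embedding.coe_subtype]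
    constructor
    · rintro ⟨b, hb, hba⟩; exact (Subtype.ext hba : b = a) ▸ hb
    · intro ha; exact ⟨a, ha, rfl⟩
  refine Finset.sum_nbij' (fun T => T.subtype P) (fun S => S.map (Function.Embedding.subtype P))
    ?_ ?_ ?_ ?_ ?_
  · intro T hT
    rw [Finset.mem_filter, Finset.mem_filter] at hT
    obtain ⟨⟨-, hArb⟩, hQ⟩ := hT
    rw [Finset.mem_filter]
    refine ⟨Finset.mem_univ _, ?_⟩
    rw [isArbor_map_iff, key1 T (h1 T hArb hQ)]
    exact hArb
  · intro S hS
    rw [Finset.mem_filter] at hS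
    obtain ⟨-, hArb⟩ := hS
    have hArb' := (isArbor_map_iff n s t P S).mp hArb
    rw [Finset.mem_filter, Finset.mem_filter]
    exact ⟨⟨Finset.mem_univ _, hArb'⟩, h2 S hArb⟩
  · intro T hT
    rw [Finset.mem_filter, Finset.mem_filter] at hT
    exact key1 T (h1 T hT.1.2 hT.2)
  · intro S _; exact key2 S
  · intro T hT
    rw [Finset.mem_filter, Finset.mem_filter] at hT
    conv_lhs => rw [← key1 T (h1 T hT.1.2 hT.2)]
    rw [Finset.prod_map]
    rfl

theorem sum_arborescence_weights_split_at_vertex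
    (n : ℕ) (hn : 1 ≤ n) (R : Type*) [CommRing R]
    (E : Type*) [Fintype E] [DecidableEq E]
    (s t : E → Fin (n + 1)) (w : E → R)
    (ht : ∀ e, t e ≠ 0) (hs : ∀ e, s e ≠ t e)
    (j : Fin (n + 1)) (hj : j ≠ 0) :
    (∑ S ∈ Finset.univ.filter (IsArbor n s t), ∏ e ∈ S, w e)
    = (∑ S ∈ Finset.univ.filter (fun S : Finset {e : E // ¬(t e = j ∧ s e ≠ 0)} =>
          IsArbor n (fun e => s e.1) (fun e => t e.1) S), ∏ e ∈ S, w e.1)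
    + ∑ S ∈ Finset.univ.filter (fun S : Finset {e : E // ¬(t e = j ∧ s e = 0)} =>
          IsArbor n (fun e => s e.1) (fun e => t e.1) S), ∏ e ∈ S, w e.1 := by
  classical
  set C : Finset E → Prop := fun S => ∃ e ∈ S, t e = j ∧ s e = 0 with hC
  rw [← @Finset.sum_filter_add_sum_filter_not (Finset E) R _
    (Finset.univ.filter (IsArbor n s t)) C
    (fun S => Classical.propDecidable _) (fun S => Classical.propDecidable _)
    (fun S => ∏ e ∈ S, w e)]
  have hhalf1 : ∀ T : Finset E, IsArbor n s t T → C T →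
      ∀ e ∈ T, ¬(t e = j ∧ s e ≠ 0) := by
    rintro T hArb ⟨f, hfT, hfj, hf0⟩ e heT ⟨hej, he0⟩
    obtain ⟨g, -, hg⟩ := hArb.2.1 j hj
    have h1 : e = g := hg e ⟨heT, hej⟩
    have h2 : f = g := hg f ⟨hfT, hfj⟩
    exact he0 (h1 ▸ h2 ▸ hf0)
  have hhalf2 : ∀ S : Finset {e : E // ¬(t e = j ∧ s e ≠ 0)},
      IsArbor n (fun e => s e.1) (fun e => t e.1) S →
      C (S.map (Function.Embedding.subtype _)) := by
    intro S hArb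
    have hArb' := (isArbor_map_iff n s t _ S).mp hArb
    obtain ⟨e, ⟨heS, hej⟩, -⟩ := hArb'.2.1 j hj
    obtain ⟨a, haS, hae'⟩ := Finset.mem_map.1 heS
    have hae : a.1 = e := hae'
    have ha2 : ¬(t a.1 = j ∧ s a.1 ≠ 0) := a.2
    have hs0 : s e = 0 := by
      by_contra h
      exact ha2 ⟨hae ▸ hej, hae ▸ h⟩
    exact ⟨e, heS, hej, hs0⟩
  have hhalf3 : ∀ T : Finset E, IsArbor n s t T → ¬ C T →
      ∀ e ∈ T, ¬(t e = j ∧ s e = 0) := by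
    rintro T hArb hnC e heT ⟨hej, he0⟩
    exact hnC ⟨e, heT, hej, he0⟩
  have hhalf4 : ∀ S : Finset {e : E // ¬(t e = j ∧ s e = 0)},
      IsArbor n (fun e => s e.1) (fun e => t e.1) S →
      ¬ C (S.map (Function.Embedding.subtype _)) := by
    rintro S hArb ⟨e, heS, hej, he0⟩
    obtain ⟨a, haS, hae'⟩ := Finset.mem_map.1 heS
    have hae : a.1 = e := hae'
    exact a.2 ⟨hae ▸ hej, hae ▸ he0⟩
  congr 1
  · convert sum_half n s t w (fun e => ¬(t e = j ∧ s e ≠ 0)) C hhalf1 hhalf2 using 2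
    congr!
  · convert sum_half n s t w (fun e => ¬(t e = j ∧ s e = 0)) (fun S => ¬ C S)
      hhalf3 hhalf4 using 2
    congr!
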